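/- For all f, g ∈ A, the pair (f, g) belongs to θ if and only if for every unary polynomial F of A one has F(f) ∧ β = β ⇔ F(g) ∧ β = β. -/

import Mathlib

/-- The polynomial clone of an algebra on `A` with basic operations `Ops`:
functions obtained by composing basic operations, coordinate projections,
and constant functions. -/
inductive AlgPoly {A : Type*} (Ops : (n : ℕ) → Set ((Fin n → A) → A)) :
    {m : ℕ} → ((Fin m → A) → A) → Prop where
  | proj {m : ℕ} (i : Fin m) : AlgPoly Ops fun v => v i
  | const {m : ℕ} (c : A) : AlgPoly Ops fun _ : Fin m → A => c
  | comp {m n : ℕ} (f : (Fin n → A) → A) (hf : f ∈ Ops n)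
      (g : Fin n → ((Fin m → A) → A)) (hg : ∀ i, AlgPoly Ops (g i)) :
      AlgPoly Ops fun v => f fun i => g i v

/-- Compatibility of a relation with all basic operations. -/
def IsCompatible {A : Type*} (Ops : (n : ℕ) → Set ((Fin n → A) → A))
    (R : A → A → Prop) : Prop :=
  ∀ (n : ℕ), ∀ f ∈ Ops n, ∀ v w : Fin n → A, (∀ i, R (v i) (w i)) → R (f v) (f w)

lemma algPoly_comp' {A : Type*} {Ops : (n : ℕ) → Set ((Fin n → A) → A)}
    {m n : ℕ} {h : (Fin n → A) → A} (hh : AlgPoly Ops h)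
    (g : Fin n → ((Fin m → A) → A)) (hg : ∀ i, AlgPoly Ops (g i)) :
    AlgPoly Ops (fun v => h fun i => g i v) := by
  induction hh with
  | proj i => exact hg i
  | const c => exact AlgPoly.const c
  | comp f hf gs hgs ih => exact AlgPoly.comp f hf (fun i v => gs i fun j => g j v) ih

lemma algPoly_pres {A : Type*} {Ops : (n : ℕ) → Set ((Fin n → A) → A)}
    {R : A → A → Prop} (hrefl : ∀ a, R a a) (hc : IsCompatible Ops R)
    {m : ℕ} {p : (Fin m → A) → A} (hp : AlgPoly Ops p) :
    ∀ v w : Fin m → A, (∀ i, R (v i) (w i)) → R (p v) (p w) := by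
  induction hp with
  | proj i => intro v w h; exact h i
  | const c => intro v w h; exact hrefl c
  | comp f hf gs hgs ih => intro v w h; exact hc _ f hf _ _ (fun i => ih i v w h)


/-- Lemma 5.1(4): in a finite algebra with semilattice meet among the basic
operations, with θ̄ the unique cover of θ and β minimal admissible, (f,g) ∈ θ iff for
every unary polynomial F, F(f) ∧ β = β ⇔ F(g) ∧ β = β. -/
theorem statement3 {A : Type*} [Fintype A] [Nonempty A] [SemilatticeInf A]
    (Ops : (n : ℕ) → Set ((Fin n → A) → A))
    (hmeet : (fun v : Fin 2 → A => v 0 ⊓ v 1) ∈ Ops 2)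
    (θ θb : A → A → Prop)
    (hθ : Equivalence θ) (hθb : Equivalence θb)
    (hθc : IsCompatible Ops θ) (hθbc : IsCompatible Ops θb)
    (hsub : ∀ x y, θ x y → θb x y)
    (hproper : ∃ x y, θb x y ∧ ¬ θ x y)
    (hcover : ∀ R : A → A → Prop, Equivalence R → IsCompatible Ops R →
      (∀ x y, θ x y → R x y) → (∃ x y, R x y ∧ ¬ θ x y) → ∀ x y, θb x y → R x y)
    (β : A)
    (hadm : ∃ y, y < β ∧ θb β y ∧ ¬ θ β y)
    (hmin : ∀ x : A, (∃ y, y < x ∧ θb x y ∧ ¬ θ x y) → ¬ x < β) :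
    ∀ f g : A, θ f g ↔
      ∀ F : A → A, AlgPoly Ops (m := 1) (fun v => F (v 0)) →
        (F f ⊓ β = β ↔ F g ⊓ β = β) := by
  obtain ⟨y₀, hy₀lt, hy₀θb, hy₀θ⟩ := hadm
  -- θ is compatible with the meet
  have hmeetθ : ∀ a b c d : A, θ a b → θ c d → θ (a ⊓ c) (b ⊓ d) := by
    intro a b c d h1 h2
    have := hθc 2 _ hmeet ![a, c] ![b, d] (by
      intro i
      fin_cases i <;> simpa)
    simpa using this
  have hmeetθb : ∀ a b c d : A, θb a b → θb c d → θb (a ⊓ c) (b ⊓ d) := by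
    intro a b c d h1 h2
    have := hθbc 2 _ hmeet ![a, c] ![b, d] (by
      intro i
      fin_cases i <;> simpa)
    simpa using this
  -- key: if θ a b and a ⊓ β = β then b ⊓ β = β
  have key : ∀ a b : A, θ a b → a ⊓ β = β → b ⊓ β = β := by
    intro a b hab ha
    have h1 : θ β (b ⊓ β) := by
      have := hmeetθ a b β β hab (hθ.refl β)
      rwa [ha] at this
    by_contra hne
    set z := b ⊓ β with hz
    have hzle : z ≤ β := inf_le_right
    have hzlt : z < β := lt_of_le_of_ne hzle hne
    set y' := z ⊓ y₀ with hy'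
    have hy'z : y' ≤ z := inf_le_left
    have hy'y : y' ≤ y₀ := inf_le_right
    have hzθb : θb z β := hθb.symm (hsub _ _ h1)
    have hy'θb : θb z y' := by
      have h2 : θb y' β := by
        have := hmeetθb z β y₀ β hzθb (hθb.symm hy₀θb)
        simpa [inf_eq_left.mpr (le_of_lt hzlt)] using this
      exact hθb.trans hzθb (hθb.symm h2)
    have hy'nθ : ¬ θ z y' := by
      intro hzy'
      have hβy' : θ β y' := hθ.trans h1 hzy'
      have : θ (y₀ ⊓ β) (y₀ ⊓ y') := hmeetθ y₀ y₀ β y' (hθ.refl y₀) hβy'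
      rw [inf_eq_left.mpr (le_of_lt hy₀lt), inf_eq_right.mpr hy'y] at this
      exact hy₀θ (hθ.trans hβy' (hθ.symm this))
    have hy'lt : y' < z := lt_of_le_of_ne hy'z (fun h => hy'nθ (h ▸ hθ.refl _))
    exact hmin z ⟨y', hy'lt, hy'θb, hy'nθ⟩ hzlt
  intro f g
  constructor
  · intro hfg F hF
    have hFθ : θ (F f) (F g) :=
      algPoly_pres hθ.refl hθc hF (fun _ => f) (fun _ => g) (fun _ => hfg)
    exact ⟨key _ _ hFθ, key _ _ (hθ.symm hFθ)⟩
  · intro hRfg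
    by_contra hnθ
    -- define the relation R
    set R : A → A → Prop := fun a b =>
      ∀ F : A → A, AlgPoly Ops (m := 1) (fun v => F (v 0)) →
        (F a ⊓ β = β ↔ F b ⊓ β = β) with hRdef
    have hRequiv : Equivalence R :=
      ⟨fun a F hF => Iff.rfl, fun h F hF => (h F hF).symm,
       fun h1 h2 F hF => (h1 F hF).trans (h2 F hF)⟩
    have hθR : ∀ a b, θ a b → R a b := by
      intro a b hab F hF
      have hFθ : θ (F a) (F b) :=
        algPoly_pres hθ.refl hθc hF (fun _ => a) (fun _ => b) (fun _ => hab)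
      exact ⟨key _ _ hFθ, key _ _ (hθ.symm hFθ)⟩
    have hRcomp : IsCompatible Ops R := by
      intro n f' hf' v w hvw
      -- stepwise replacement
      have step : ∀ (u : Fin n → A) (i : Fin n),
          R (f' (Function.update u i (v i))) (f' (Function.update u i (w i))) := by
        intro u i F hF
        set G : A → A := fun x => F (f' (Function.update u i x)) with hG
        have hginner : ∀ j : Fin n,
            AlgPoly Ops (fun t : Fin 1 → A => Function.update u i (t 0) j) := by
          intro j
          by_cases hj : j = i
          · subst hj
            simpa using AlgPoly.proj (Ops := Ops) (m := 1) 0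
          · simpa [Function.update_of_ne hj] using
              AlgPoly.const (Ops := Ops) (m := 1) (u j)
        have hinner : AlgPoly Ops (fun t : Fin 1 → A => f' (Function.update u i (t 0))) :=
          AlgPoly.comp f' hf' _ hginner
        have hGpoly : AlgPoly Ops (m := 1) (fun t => G (t 0)) :=
          algPoly_comp' hF (fun _ => fun t : Fin 1 → A => f' (Function.update u i (t 0)))
            (fun _ => hinner)
        exact hvw i G hGpoly
      -- chain from v to w
      have seqR : ∀ k : ℕ, k ≤ n →
          R (f' v) (f' (fun j : Fin n => if (j : ℕ) < k then w j else v j)) := by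
        intro k
        induction k with
        | zero =>
            intro _
            have : (fun j : Fin n => if (j : ℕ) < 0 then w j else v j) = v := by
              funext j; simp
            rw [this]
            exact hRequiv.refl _
        | succ k ih =>
            intro hk
            have hk' : k < n := hk
            have ihR := ih (le_of_lt hk')
            set i : Fin n := ⟨k, hk'⟩ with hi
            set u : Fin n → A := fun j : Fin n => if (j : ℕ) < k then w j else v j with hu
            have h1 : Function.update u i (v i) = u := by
              funext j
              by_cases hj : j = i
              · subst hj; simp [hu, hi]
              · simp [Function.update_of_ne hj]
            have h2 : Function.update u i (w i) =
                (fun j : Fin n => if (j : ℕ) < k + 1 then w j else v j) := by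
              funext j
              by_cases hj : j = i
              · subst hj; simp [hu, hi, Function.update_self]
              · have hji : (j : ℕ) ≠ k := by
                  intro h; exact hj (Fin.ext h)
                have : ((j : ℕ) < k + 1) ↔ ((j : ℕ) < k) := by omega
                simp [Function.update_of_ne hj, hu, this]
            have hstep := step u i
            rw [h1, h2] at hstep
            exact hRequiv.trans ihR hstep
      have hfinal := seqR n le_rfl
      have : (fun j : Fin n => if (j : ℕ) < n then w j else v j) = w := by
        funext j; simp [j.isLt]
      rwa [this] at hfinal
    have hcov := hcover R hRequiv hRcomp hθR ⟨f, g, hRfg, hnθ⟩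
    have hRβy := hcov β y₀ hy₀θb
    have hid := hRβy id (by simpa using AlgPoly.proj (Ops := Ops) (m := 1) 0)
    simp only [id] at hid
    have : y₀ ⊓ β = β := hid.mp (by simp)
    rw [inf_eq_left.mpr (le_of_lt hy₀lt)] at this
    exact absurd this (ne_of_lt hy₀lt)
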